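/- Let φ ∈ X (continuous, nonpositive, vanishing at infinity, m(φ) = inf (1+|x|)|φ(x)| > 0). Then the Jacobian a_φ is C¹ on (-∞,0) with derivative a_φ'(e) = 4π√2 ∫_{ℝ³}(e-φ(x))₊^{1/2} dx, and a_φ is a strictly increasing C¹ diffeomorphism from [min φ, 0) onto [0,+∞); in particular a_φ(e) → +∞ as e → 0⁻. -/

import Mathlib

open MeasureTheory Real Filter Set

noncomputable section

abbrev R3 := EuclideanSpace ℝ (Fin 3)

def mX (φ : R3 → ℝ) : ℝ := ⨅ x : R3, (1 + ‖x‖) * |φ x|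

def memX (φ : R3 → ℝ) : Prop :=
  Continuous φ ∧ (∀ x, φ x ≤ 0) ∧ Tendsto φ (cocompact R3) (nhds 0) ∧
    Integrable (fun x => ‖fderiv ℝ φ x‖ ^ 2) ∧ 0 < mX φ

/-- The Jacobian `a_φ(e) = (8π√2/3)∫ (e-φ(x))₊^{3/2} dx`. -/
def aphi (φ : R3 → ℝ) (e : ℝ) : ℝ :=
  (8 * π * Real.sqrt 2 / 3) * ∫ x : R3, (max (e - φ x) 0) ^ ((3 : ℝ) / 2)

/-- The function `t ↦ (max t 0)^{3/2}` is differentiable with derivative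
`(3/2)(max t 0)^{1/2}`. -/
lemma hasDerivAt_maxRpow (t : ℝ) :
    HasDerivAt (fun s : ℝ => max s 0 ^ ((3 : ℝ) / 2))
      ((3 : ℝ) / 2 * max t 0 ^ ((1 : ℝ) / 2)) t := by
  rcases lt_trichotomy t 0 with ht | rfl | ht
  · have h0 : max t 0 = 0 := max_eq_right ht.le
    have hev : (fun s : ℝ => max s 0 ^ ((3 : ℝ) / 2)) =ᶠ[nhds t] fun _ => 0 := by
      filter_upwards [Iio_mem_nhds ht] with s hs
      rw [max_eq_right (le_of_lt hs), Real.zero_rpow (by norm_num)]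
    rw [h0, Real.zero_rpow (by norm_num), mul_zero]
    exact (hasDerivAt_const t 0).congr_of_eventuallyEq hev
  · rw [max_self, Real.zero_rpow (by norm_num), mul_zero]
    rw [hasDerivAt_iff_tendsto_slope]
    have hbound : ∀ s ∈ ({(0:ℝ)}ᶜ : Set ℝ),
        ‖slope (fun s : ℝ => max s 0 ^ ((3 : ℝ) / 2)) 0 s‖ ≤ Real.sqrt |s| := by
      intro s hs
      have hs0 : s ≠ 0 := hs
      rw [slope_def_field]
      have hf0 : max (0:ℝ) 0 ^ ((3 : ℝ) / 2) = 0 := by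
        rw [max_self, Real.zero_rpow (by norm_num)]
      rcases le_or_gt s 0 with h | h
      · rw [max_eq_right h, Real.zero_rpow (by norm_num), hf0]
        simpa using Real.sqrt_nonneg |s|
      · rw [max_eq_left h.le, hf0, sub_zero, sub_zero]
        have : s ^ ((3 : ℝ) / 2) / s = s ^ ((1 : ℝ) / 2) := by
          nth_rewrite 2 [show s = s ^ (1:ℝ) by rw [Real.rpow_one]]
          rw [← Real.rpow_sub h]
          norm_num
        rw [this, abs_of_pos h, Real.sqrt_eq_rpow, Real.norm_eq_abs,
          abs_of_nonneg (Real.rpow_nonneg h.le _)]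
    have hg : Tendsto (fun s : ℝ => Real.sqrt |s|) (nhdsWithin 0 ({(0:ℝ)}ᶜ)) (nhds 0) := by
      have : ContinuousAt (fun s : ℝ => Real.sqrt |s|) 0 :=
        (Real.continuous_sqrt.comp continuous_abs).continuousAt
      simpa using this.tendsto.mono_left nhdsWithin_le_nhds
    exact squeeze_zero_norm' (eventually_nhdsWithin_of_forall hbound) hg
  · have hev : (fun s : ℝ => max s 0 ^ ((3 : ℝ) / 2)) =ᶠ[nhds t]
        fun s => s ^ ((3 : ℝ) / 2) := by
      filter_upwards [Ioi_mem_nhds ht] with s hs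
      rw [max_eq_left (le_of_lt hs)]
    have h1 : HasDerivAt (fun s : ℝ => s ^ ((3 : ℝ) / 2))
        ((3 : ℝ) / 2 * t ^ ((3 : ℝ) / 2 - 1)) t :=
      Real.hasDerivAt_rpow_const (Or.inl ht.ne')
    have h2 : (3 : ℝ) / 2 - 1 = 1 / 2 := by norm_num
    rw [h2] at h1
    have := h1.congr_of_eventuallyEq hev
    rwa [max_eq_left ht.le]

theorem jacobian_diffeomorphism (φ : R3 → ℝ) (hφ : memX φ)
    (x₀ : R3) (hx₀ : ∀ x, φ x₀ ≤ φ x) :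
    ContDiffOn ℝ 1 (aphi φ) (Iio (0 : ℝ)) ∧
    (∀ e < (0 : ℝ),
      HasDerivAt (aphi φ)
        (4 * π * Real.sqrt 2 * ∫ x : R3, (max (e - φ x) 0) ^ ((1 : ℝ) / 2)) e) ∧
    StrictMonoOn (aphi φ) (Ico (φ x₀) 0) ∧
    (aphi φ) '' (Ico (φ x₀) 0) = Ici (0 : ℝ) ∧
    Tendsto (aphi φ) (nhdsWithin 0 (Iio (0 : ℝ))) atTop := by
  obtain ⟨hc, hneg, htend, -, hm⟩ := hφ
  -- basic facts
  have hmle : ∀ x : R3, mX φ ≤ (1 + ‖x‖) * |φ x| := by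
    intro x
    apply ciInf_le
    refine ⟨0, ?_⟩
    rintro y ⟨z, rfl⟩
    positivity
  have hφ_bound : ∀ x : R3, φ x ≤ -(mX φ / (1 + ‖x‖)) := by
    intro x
    have h1 : (0:ℝ) < 1 + ‖x‖ := by positivity
    have h2 := hmle x
    rw [abs_of_nonpos (hneg x)] at h2
    have h3 : mX φ / (1 + ‖x‖) ≤ -φ x := by
      rw [div_le_iff₀ h1]
      nlinarith
    linarith
  have hφx₀neg : φ x₀ < 0 := by
    have h1 : (0:ℝ) < mX φ / (1 + ‖x₀‖) := by positivity
    linarith [hφ_bound x₀]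
  -- compact sublevel sets
  have hcompact : ∀ c : ℝ, c < 0 → IsCompact {x : R3 | φ x ≤ c} := by
    intro c hcn
    have hmem : φ ⁻¹' (Ioi c) ∈ cocompact R3 := htend (Ioi_mem_nhds hcn)
    rw [mem_cocompact] at hmem
    obtain ⟨K, hK, hKsub⟩ := hmem
    apply hK.of_isClosed_subset (isClosed_le hc continuous_const)
    intro x hx
    by_contra h
    exact absurd (hKsub h) (by simpa using hx)
  -- integrability
  have hint : ∀ p : ℝ, 0 < p → ∀ e : ℝ, e < 0 →
      Integrable (fun x : R3 => max (e - φ x) 0 ^ p) := by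
    intro p hp e he
    have hcont : Continuous (fun x : R3 => max (e - φ x) 0 ^ p) :=
      ((continuous_const.sub hc).max continuous_const).rpow_const fun x => Or.inr hp.le
    refine hcont.integrable_of_hasCompactSupport ?_
    refine HasCompactSupport.intro (hcompact e he) ?_
    intro x hx
    simp only [mem_setOf_eq, not_le] at hx
    rw [max_eq_right (by linarith), Real.zero_rpow hp.ne']
  -- derivative of the integral
  have hkey : ∀ e : ℝ, e < 0 →
      HasDerivAt (fun e' : ℝ => ∫ x : R3, max (e' - φ x) 0 ^ ((3 : ℝ) / 2))
        ((3 : ℝ) / 2 * ∫ x : R3, max (e - φ x) 0 ^ ((1 : ℝ) / 2)) e := by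
    intro e he
    have hε : (0:ℝ) < -e / 2 := by linarith
    have hball : ∀ e' ∈ Metric.ball e (-e / 2), e' ≤ e / 2 := by
      intro e' he'
      rw [Metric.mem_ball, Real.dist_eq] at he'
      have := abs_lt.1 he'
      linarith [this.2]
    have hmain := hasDerivAt_integral_of_dominated_loc_of_deriv_le (μ := volume)
      (F := fun (e' : ℝ) (x : R3) => max (e' - φ x) 0 ^ ((3 : ℝ) / 2))
      (F' := fun (e' : ℝ) (x : R3) => (3 : ℝ) / 2 * max (e' - φ x) 0 ^ ((1 : ℝ) / 2))
      (bound := fun x : R3 => (3 : ℝ) / 2 * max (e / 2 - φ x) 0 ^ ((1 : ℝ) / 2)) (Metric.ball_mem_nhds e hε)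
      (Eventually.of_forall fun e' =>
        (((continuous_const.sub hc).max continuous_const).rpow_const fun x =>
          Or.inr (by norm_num)).aestronglyMeasurable)
      (hint _ (by norm_num) e he)
      ((continuous_const.mul
        (((continuous_const.sub hc).max continuous_const).rpow_const fun x =>
          Or.inr (by norm_num))).aestronglyMeasurable)
      (Eventually.of_forall fun x => by
        intro e' he'
        have h1 : max (e' - φ x) 0 ≤ max (e / 2 - φ x) 0 :=
          max_le_max (by linarith [hball e' he']) le_rfl
        rw [Real.norm_eq_abs,
          abs_of_nonneg (mul_nonneg (by norm_num) (Real.rpow_nonneg (le_max_right _ _) _))]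
        exact mul_le_mul_of_nonneg_left
          (Real.rpow_le_rpow (le_max_right _ _) h1 (by norm_num)) (by norm_num))
      ((hint _ (by norm_num) (e / 2) (by linarith)).const_mul _)
      (Eventually.of_forall fun x => by
        intro e' _
        have h1 : HasDerivAt (fun u : ℝ => u - φ x) 1 e' :=
          (hasDerivAt_id e').sub_const (φ x)
        have h2 := (hasDerivAt_maxRpow (e' - φ x)).comp e' h1
        simpa [Function.comp_def] using h2)
    have h3 := hmain.2
    rwa [integral_const_mul] at h3
  -- the derivative claim
  have hderiv : ∀ e < (0 : ℝ), HasDerivAt (aphi φ)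
      (4 * π * Real.sqrt 2 * ∫ x : R3, max (e - φ x) 0 ^ ((1 : ℝ) / 2)) e := by
    intro e he
    have h1 := (hkey e he).const_mul (8 * π * Real.sqrt 2 / 3)
    have h2 : (8 * π * Real.sqrt 2 / 3) *
        ((3 : ℝ) / 2 * ∫ x : R3, max (e - φ x) 0 ^ ((1 : ℝ) / 2)) =
        4 * π * Real.sqrt 2 * ∫ x : R3, max (e - φ x) 0 ^ ((1 : ℝ) / 2) := by ring
    rw [h2] at h1
    exact h1
  -- continuity of the candidate derivative
  have hcontInt : ContinuousOn
      (fun e : ℝ => ∫ x : R3, max (e - φ x) 0 ^ ((1 : ℝ) / 2)) (Iio 0) := by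
    intro e he
    apply ContinuousAt.continuousWithinAt
    have he0 : e < 0 := he
    apply continuousAt_of_dominated (bound := fun x : R3 => max (e / 2 - φ x) 0 ^ ((1 : ℝ) / 2))
    · exact Eventually.of_forall fun e' =>
        (((continuous_const.sub hc).max continuous_const).rpow_const fun x =>
          Or.inr (by norm_num)).aestronglyMeasurable
    · filter_upwards [Iio_mem_nhds (show e < e / 2 by linarith)] with e' he'
      apply Eventually.of_forall
      intro x
      rw [Real.norm_eq_abs, abs_of_nonneg (Real.rpow_nonneg (le_max_right _ _) _)]
      exact Real.rpow_le_rpow (le_max_right _ _)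
        (max_le_max (by linarith [mem_Iio.mp he']) le_rfl) (by norm_num)
    · exact hint _ (by norm_num) (e / 2) (by linarith)
    · exact Eventually.of_forall fun x =>
        (((continuous_id.sub continuous_const).max continuous_const).rpow_const fun s =>
          Or.inr (by norm_num)).continuousAt
  -- C¹
  have hC1 : ContDiffOn ℝ 1 (aphi φ) (Iio (0 : ℝ)) := by
    rw [show (1 : WithTop ℕ∞) = 0 + 1 by norm_num,
      contDiffOn_succ_iff_deriv_of_isOpen isOpen_Iio]
    refine ⟨fun e he => (hderiv e he).differentiableAt.differentiableWithinAt, by simp, ?_⟩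
    rw [contDiffOn_zero]
    have hc2 : ContinuousOn
        (fun e : ℝ => 4 * π * Real.sqrt 2 * ∫ x : R3, max (e - φ x) 0 ^ ((1 : ℝ) / 2))
        (Iio (0:ℝ)) := continuousOn_const.mul hcontInt
    refine hc2.congr ?_
    intro e he
    exact (hderiv e he).deriv
  -- strict monotonicity
  have hmono : StrictMonoOn (aphi φ) (Ico (φ x₀) 0) := by
    rintro e1 ⟨h1a, h1b⟩ e2 ⟨h2a, h2b⟩ h12
    have hint1 := hint _ (by norm_num : (0:ℝ) < 3 / 2) e1 h1b
    have hint2 := hint _ (by norm_num : (0:ℝ) < 3 / 2) e2 h2b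
    have hle : ∀ x : R3, max (e1 - φ x) 0 ^ ((3 : ℝ) / 2) ≤ max (e2 - φ x) 0 ^ ((3 : ℝ) / 2) := by
      intro x
      exact Real.rpow_le_rpow (le_max_right _ _) (max_le_max (by linarith) le_rfl) (by norm_num)
    have hpos : 0 < ∫ x : R3,
        (max (e2 - φ x) 0 ^ ((3 : ℝ) / 2) - max (e1 - φ x) 0 ^ ((3 : ℝ) / 2)) := by
      rw [integral_pos_iff_support_of_nonneg (fun x => sub_nonneg.2 (hle x)) (hint2.sub hint1)]
      have hU : IsOpen {x : R3 | φ x < e2} := isOpen_lt hc continuous_const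
      have hsub : {x : R3 | φ x < e2} ⊆ Function.support
          (fun x => max (e2 - φ x) 0 ^ ((3 : ℝ) / 2) - max (e1 - φ x) 0 ^ ((3 : ℝ) / 2)) := by
        intro x hx
        have hx2 : 0 < e2 - φ x := by
          have : φ x < e2 := hx
          linarith
        have hlt : max (e1 - φ x) 0 < e2 - φ x := by
          rcases le_or_gt (e1 - φ x) 0 with h | h
          · rwa [max_eq_right h]
          · rw [max_eq_left h.le]; linarith
        have h5 : max (e1 - φ x) 0 ^ ((3 : ℝ) / 2) < max (e2 - φ x) 0 ^ ((3 : ℝ) / 2) := by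
          rw [max_eq_left hx2.le]
          exact Real.rpow_lt_rpow (le_max_right _ _) hlt (by norm_num)
        simpa [Function.mem_support] using sub_ne_zero.2 h5.ne'
      have hx₀mem : x₀ ∈ {x : R3 | φ x < e2} := by
        simp only [mem_setOf_eq]
        linarith
      exact (hU.measure_pos volume ⟨x₀, hx₀mem⟩).trans_le (measure_mono hsub)
    have hIlt : (∫ x : R3, max (e1 - φ x) 0 ^ ((3 : ℝ) / 2)) <
        ∫ x : R3, max (e2 - φ x) 0 ^ ((3 : ℝ) / 2) := by
      rw [integral_sub hint2 hint1] at hpos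
      linarith
    have hCpos : (0:ℝ) < 8 * π * Real.sqrt 2 / 3 := by positivity
    exact mul_lt_mul_of_pos_left hIlt hCpos
  -- value at the minimum
  have ha0 : aphi φ (φ x₀) = 0 := by
    unfold aphi
    have h0 : (fun x : R3 => max (φ x₀ - φ x) 0 ^ ((3 : ℝ) / 2)) = fun _ => 0 := by
      funext x
      rw [max_eq_right (by linarith [hx₀ x]), Real.zero_rpow (by norm_num)]
    rw [h0, integral_zero, mul_zero]
  -- tendsto atTop
  have hC3 : (0:ℝ) < Real.sqrt π ^ 3 / Real.Gamma ((3:ℝ) / 2 + 1) := by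
    have h1 := Real.Gamma_pos_of_pos (show (0:ℝ) < 3 / 2 + 1 by norm_num)
    have h2 : (0:ℝ) < Real.sqrt π := Real.sqrt_pos.2 Real.pi_pos
    positivity
  have htop : Tendsto (aphi φ) (nhdsWithin 0 (Iio (0 : ℝ))) atTop := by
    set m := mX φ with hmdef
    set C : ℝ := Real.sqrt π ^ 3 / Real.Gamma ((3:ℝ) / 2 + 1) with hCdef
    set K : ℝ := (8 * π * Real.sqrt 2 / 3) * (C * (m / 4) ^ 3) with hKdef
    have hKpos : 0 < K := by positivity
    have hcomp : Tendsto (fun e : ℝ => K * ((-e) ^ ((3:ℝ) / 2))⁻¹)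
        (nhdsWithin 0 (Iio (0:ℝ))) atTop := by
      apply Tendsto.const_mul_atTop hKpos
      apply tendsto_inv_nhdsGT_zero.comp
      have h1 : Tendsto (fun e : ℝ => (-e) ^ ((3:ℝ) / 2)) (nhdsWithin 0 (Iio (0:ℝ))) (nhds 0) := by
        have hcont : ContinuousAt (fun e : ℝ => (-e) ^ ((3:ℝ) / 2)) 0 :=
          (continuous_neg.rpow_const fun x => Or.inr (by norm_num)).continuousAt
        have := hcont.tendsto.mono_left (nhdsWithin_le_nhds (s := Iio (0:ℝ)))
        simpa [Real.zero_rpow] using this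
      refine tendsto_nhdsWithin_of_tendsto_nhds_of_eventually_within _ h1 ?_
      filter_upwards [self_mem_nhdsWithin] with e he
      have h2 : (0:ℝ) < -e := by simpa using he
      exact Real.rpow_pos_of_pos h2 _
    apply tendsto_atTop_mono' _ _ hcomp
    have hmem : Ioo (-(m / 4)) 0 ∈ nhdsWithin (0:ℝ) (Iio (0:ℝ)) :=
      Ioo_mem_nhdsLT_of_mem ⟨by linarith, le_refl 0⟩
    filter_upwards [hmem] with e he
    obtain ⟨he1, he2⟩ := he
    set t : ℝ := -e with htdef
    have ht0 : 0 < t := by simp only [htdef]; linarith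
    have htm : t ≤ m / 4 := by simp only [htdef]; linarith
    set r : ℝ := m / (2 * t) - 1 with hrdef
    have hmt : (1:ℝ) ≤ m / (4 * t) := by
      rw [le_div_iff₀ (by positivity)]
      linarith
    have hsplit : m / (2 * t) = m / (4 * t) + m / (4 * t) := by
      field_simp
      ring
    have hr4 : m / (4 * t) ≤ r := by
      simp only [hrdef]
      rw [hsplit]
      linarith
    have hr0 : (0:ℝ) < r := lt_of_lt_of_le zero_lt_one (hmt.trans hr4)
    -- pointwise bound on the ball
    have hball : ∀ x ∈ Metric.ball (0 : R3) r,
        t ^ ((3:ℝ) / 2) ≤ max (e - φ x) 0 ^ ((3:ℝ) / 2) := by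
      intro x hx
      rw [Metric.mem_ball, dist_zero_right] at hx
      have h1 : 1 + ‖x‖ < m / (2 * t) := by
        simp only [hrdef] at hx
        linarith
      have h2 : 2 * t ≤ m / (1 + ‖x‖) := by
        rw [le_div_iff₀ (by positivity)]
        have := (lt_div_iff₀ (by positivity : (0:ℝ) < 2 * t)).1 h1
        nlinarith
      have h3 := hφ_bound x
      have h4 : t ≤ e - φ x := by
        have : m / (1 + ‖x‖) ≤ -φ x := by linarith
        simp only [htdef]
        linarith
      exact Real.rpow_le_rpow ht0.le (le_trans h4 (le_max_left _ _)) (by norm_num)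
    have hvol : (volume (Metric.ball (0 : R3) r)).toReal = r ^ 3 * C := by
      rw [EuclideanSpace.volume_ball]
      simp only [Fintype.card_fin]
      rw [ENNReal.toReal_mul, ENNReal.toReal_pow, ENNReal.toReal_ofReal hr0.le,
        ENNReal.toReal_ofReal (by positivity)]
      norm_num [hCdef]
    have hIb : t ^ ((3:ℝ) / 2) * (r ^ 3 * C) ≤
        ∫ x in Metric.ball (0 : R3) r, max (e - φ x) 0 ^ ((3:ℝ) / 2) := by
      rw [← hvol]
      have h := setIntegral_ge_of_const_le_real measurableSet_ball measure_ball_lt_top.ne hball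
        ((hint _ (by norm_num) e he2).integrableOn)
      exact h.trans' (le_of_eq (by simp [Measure.real, smul_eq_mul, mul_comm]))
    have hI2 : (∫ x in Metric.ball (0 : R3) r, max (e - φ x) 0 ^ ((3:ℝ) / 2)) ≤
        ∫ x : R3, max (e - φ x) 0 ^ ((3:ℝ) / 2) :=
      setIntegral_le_integral (hint _ (by norm_num) e he2)
        (Eventually.of_forall fun x => Real.rpow_nonneg (le_max_right _ _) _)
    -- algebra: K * (t^{3/2})⁻¹ ≤ (8π√2/3) * (t^{3/2} * (r^3 * C))
    have hsq : t ^ ((3:ℝ) / 2) * t ^ ((3:ℝ) / 2) = t ^ 3 := by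
      rw [← Real.rpow_natCast t 3, ← Real.rpow_add ht0]
      norm_num
    have hts : (0:ℝ) < t ^ ((3:ℝ) / 2) := Real.rpow_pos_of_pos ht0 _
    have halg : K * (t ^ ((3:ℝ) / 2))⁻¹ =
        (8 * π * Real.sqrt 2 / 3) * (t ^ ((3:ℝ) / 2) * ((m / (4 * t)) ^ 3 * C)) := by
      rw [hKdef]
      have h7 : (m / (4 * t)) ^ 3 = (m / 4) ^ 3 / t ^ 3 := by
        field_simp
      rw [h7, ← hsq]
      field_simp
    have hchain : K * (t ^ ((3:ℝ) / 2))⁻¹ ≤ aphi φ e := by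
      rw [halg]
      have step1 : t ^ ((3:ℝ) / 2) * ((m / (4 * t)) ^ 3 * C) ≤
          t ^ ((3:ℝ) / 2) * (r ^ 3 * C) := by
        gcongr
      have step2 : t ^ ((3:ℝ) / 2) * (r ^ 3 * C) ≤
          ∫ x : R3, max (e - φ x) 0 ^ ((3:ℝ) / 2) := hIb.trans hI2
      have hCpos : (0:ℝ) < 8 * π * Real.sqrt 2 / 3 := by positivity
      calc (8 * π * Real.sqrt 2 / 3) * (t ^ ((3:ℝ) / 2) * ((m / (4 * t)) ^ 3 * C))
          ≤ (8 * π * Real.sqrt 2 / 3) * ∫ x : R3, max (e - φ x) 0 ^ ((3:ℝ) / 2) := by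
            apply mul_le_mul_of_nonneg_left (step1.trans step2) hCpos.le
        _ = aphi φ e := rfl
    exact hchain
  -- the image
  have himg : (aphi φ) '' (Ico (φ x₀) 0) = Ici (0 : ℝ) := by
    ext y
    simp only [mem_image, mem_Ici]
    constructor
    · rintro ⟨e, he, rfl⟩
      rcases eq_or_lt_of_le he.1 with h | h
      · rw [← h, ha0]
      · have := hmono (left_mem_Ico.2 hφx₀neg) he h
        rw [ha0] at this
        exact this.le
    · intro hy
      rcases eq_or_lt_of_le hy with h | h
      · exact ⟨φ x₀, left_mem_Ico.2 hφx₀neg, by rw [ha0, h]⟩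
      · have hev : ∀ᶠ e in nhdsWithin 0 (Iio (0:ℝ)), y < aphi φ e :=
          htop.eventually_gt_atTop y
        have hev2 : Ioo (φ x₀) 0 ∈ nhdsWithin (0:ℝ) (Iio (0:ℝ)) :=
          Ioo_mem_nhdsLT_of_mem ⟨hφx₀neg, le_refl 0⟩
        obtain ⟨e', hye', he'mem⟩ := (hev.and (eventually_of_mem hev2 fun _ h => h)).exists
        have hsub : Icc (φ x₀) e' ⊆ Iio (0:ℝ) := fun z hz => lt_of_le_of_lt hz.2 he'mem.2
        have hiv : Icc (aphi φ (φ x₀)) (aphi φ e') ⊆ aphi φ '' Icc (φ x₀) e' :=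
          intermediate_value_Icc he'mem.1.le ((hC1.continuousOn).mono hsub)
        have hyIcc : y ∈ Icc (aphi φ (φ x₀)) (aphi φ e') := ⟨by rw [ha0]; exact hy, hye'.le⟩
        obtain ⟨c, hc, hcy⟩ := hiv hyIcc
        exact ⟨c, ⟨hc.1, lt_of_le_of_lt hc.2 he'mem.2⟩, hcy⟩
  exact ⟨hC1, hderiv, hmono, himg, htop⟩
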